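/- arXiv:2301.11534 — 4 statements merged into one kernel-verified Lean document; each statement's English description precedes it below -/
import Mathlib

section
/- Let X be a topological space and Δ ⊆ CL(X) a family closed under finite unions containing all singletons. A family ζ of finite tuples of open subsets of X is a π_V(Δ)-network of X if and only if the collection 𝒰 = {⟨V₁,…,Vₙ⟩ : (V₁,…,Vₙ) ∈ ζ} is an open cover of Δ with the subspace Vietoris topology. -/
open Set

universe u

variable {X : Type u}

def CLfam (X : Type u) [TopologicalSpace X] (Δ : Set (Set X)) : Prop :=
  (∀ A ∈ Δ, IsClosed A ∧ A.Nonempty) ∧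
  (∀ A ∈ Δ, ∀ B ∈ Δ, A ∪ B ∈ Δ) ∧
  (∀ x : X, ({x} : Set X) ∈ Δ)

def vbasic (L : List (Set X)) : Set (Set X) :=
  {A | (A ⊆ (⋃ V ∈ L, V)) ∧ ∀ V ∈ L, (A ∩ V).Nonempty}

def vietoris (X : Type u) [TopologicalSpace X] : TopologicalSpace (Set X) :=
  TopologicalSpace.generateFrom
    {S | ∃ L : List (Set X), L ≠ [] ∧ (∀ V ∈ L, IsOpen V) ∧ S = vbasic L}

def vietorisSub [TopologicalSpace X] (Δ : Set (Set X)) : TopologicalSpace ↥Δ :=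
  TopologicalSpace.induced Subtype.val (vietoris X)

def piVnetwork [TopologicalSpace X] (Δ : Set (Set X)) (ζ : Set (List (Set X))) : Prop :=
  ∀ U ∈ compl '' Δ, ∃ L ∈ ζ, ∃ F : Set X, F.Finite ∧
    (∀ V ∈ L, (F ∩ V).Nonempty) ∧ (⋂ V ∈ L, Vᶜ) ⊆ U ∧ F ∩ U = ∅

theorem stmt1 [TopologicalSpace X] (Δ : Set (Set X)) (hΔ : CLfam X Δ)
    (ζ : Set (List (Set X))) (hζ : ∀ L ∈ ζ, L ≠ [] ∧ ∀ V ∈ L, IsOpen V) :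
    piVnetwork Δ ζ ↔
      ((∀ L ∈ ζ, @IsOpen ↥Δ (vietorisSub Δ) {A : ↥Δ | (A : Set X) ∈ vbasic L}) ∧
        ∀ A : ↥Δ, ∃ L ∈ ζ, (A : Set X) ∈ vbasic L) := by

  have hopen : ∀ L ∈ ζ, @IsOpen ↥Δ (vietorisSub Δ) {A : ↥Δ | (A : Set X) ∈ vbasic L} := by
    intro L hL
    refine ⟨vbasic L, ?_, rfl⟩
    exact TopologicalSpace.GenerateOpen.basic _ ⟨L, (hζ L hL).1, (hζ L hL).2, rfl⟩
  constructor
  · intro hnet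
    refine ⟨hopen, ?_⟩
    rintro ⟨A, hA⟩
    obtain ⟨L, hL, F, hFfin, hFV, hsub, hFU⟩ := hnet Aᶜ ⟨A, hA, rfl⟩
    have hFA : F ⊆ A := by
      intro x hx
      by_contra hxA
      exact absurd hFU (Set.nonempty_iff_ne_empty.mp ⟨x, hx, hxA⟩)
    refine ⟨L, hL, ?_, ?_⟩
    · intro x hxA
      by_contra hxU
      have hx : x ∈ ⋂ V ∈ L, Vᶜ := by
        simp only [Set.mem_iUnion, not_exists] at hxU
        simp only [Set.mem_iInter, Set.mem_compl_iff]
        exact fun V hV hxV => hxU V hV hxV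
      exact hsub hx hxA
    · intro V hV
      obtain ⟨x, hxF, hxV⟩ := hFV V hV
      exact ⟨x, hFA hxF, hxV⟩
  · rintro ⟨-, hcov⟩
    rintro U ⟨A, hA, rfl⟩
    obtain ⟨L, hL, hsub, hmeet⟩ := hcov ⟨A, hA⟩
    have hex : ∀ V ∈ L, ∃ x, x ∈ A ∩ V := fun V hV => hmeet V hV
    have : Nonempty X := ⟨(hΔ.1 A hA).2.choose⟩
    choose! f hf using hex
    refine ⟨L, hL, f '' {V | V ∈ L}, L.finite_toSet.image f, ?_, ?_, ?_⟩
    · intro V hV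
      exact ⟨f V, ⟨V, hV, rfl⟩, (hf V hV).2⟩
    · intro x hx hxA
      simp only [Set.mem_iInter, Set.mem_compl_iff] at hx
      obtain ⟨V, hVL, hxV⟩ := Set.mem_iUnion₂.mp (hsub hxA)
      exact hx V hVL hxV
    · ext x
      simp only [Set.mem_inter_iff, Set.mem_compl_iff, Set.mem_empty_iff_false, iff_false, not_and, not_not]
      rintro ⟨V, hV, rfl⟩
      exact (hf V hV).1
end

section
/- Let X be a topological space and Δ ⊆ CL(X) a family closed under finite unions containing all singletons. A family ξ of tuples (K; V₁,…,Vₙ), where K ⊆ X is compact and V₁,…,Vₙ are open sets meeting Kᶜ, is a π_F(Δ)-network of X if and only if the collection 𝒰 = {(⋂ᵢ₌₁ⁿ Vᵢ⁻) ∩ (Kᶜ)⁺ : (K; V₁,…,Vₙ) ∈ ξ} is an open cover of Δ with the subspace Fell topology. -/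
open Set

universe u

variable {X : Type u}

def fbasic (K : Set X) (L : List (Set X)) : Set (Set X) :=
  {A | A ⊆ Kᶜ ∧ ∀ V ∈ L, (A ∩ V).Nonempty}

def fell (X : Type u) [TopologicalSpace X] : TopologicalSpace (Set X) :=
  TopologicalSpace.generateFrom
    {S | ∃ K : Set X, IsCompact K ∧ ∃ L : List (Set X), (∀ V ∈ L, IsOpen V) ∧ S = fbasic K L}

def fellSub [TopologicalSpace X] (Δ : Set (Set X)) : TopologicalSpace ↥Δ :=
  TopologicalSpace.induced Subtype.val (fell X)

def piFnetwork [TopologicalSpace X] (Δ : Set (Set X)) (ξ : Set (Set X × List (Set X))) : Prop :=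
  ∀ U ∈ compl '' Δ, ∃ p ∈ ξ, ∃ F : Set X, F.Finite ∧
    (∀ V ∈ p.2, (F ∩ V).Nonempty) ∧ p.1 ⊆ U ∧ F ∩ U = ∅

theorem stmt3 [TopologicalSpace X] (Δ : Set (Set X)) (hΔ : CLfam X Δ)
    (ξ : Set (Set X × List (Set X)))
    (hξ : ∀ p ∈ ξ, IsCompact p.1 ∧ p.2 ≠ [] ∧ ∀ V ∈ p.2, IsOpen V ∧ (V ∩ p.1ᶜ).Nonempty) :
    piFnetwork Δ ξ ↔
      ((∀ p ∈ ξ, @IsOpen ↥Δ (fellSub Δ) {A : ↥Δ | (A : Set X) ∈ fbasic p.1 p.2}) ∧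
        ∀ A : ↥Δ, ∃ p ∈ ξ, (A : Set X) ∈ fbasic p.1 p.2) := by
  have hopen : ∀ p ∈ ξ, @IsOpen ↥Δ (fellSub Δ) {A : ↥Δ | (A : Set X) ∈ fbasic p.1 p.2} := by
    intro p hp
    obtain ⟨hK, -, hV⟩ := hξ p hp
    have ho : @IsOpen (Set X) (fell X) (fbasic p.1 p.2) :=
      TopologicalSpace.isOpen_generateFrom_of_mem
        ⟨p.1, hK, p.2, fun V hV' => (hV V hV').1, rfl⟩
    exact ⟨fbasic p.1 p.2, ho, rfl⟩
  constructor
  · intro h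
    refine ⟨hopen, fun A => ?_⟩
    obtain ⟨p, hp, F, hF, hFV, hpA, hFA⟩ := h (↑A)ᶜ ⟨A, A.2, rfl⟩
    refine ⟨p, hp, ?_, ?_⟩
    · intro x hx hx'
      exact hpA hx' hx
    · intro V hV
      obtain ⟨x, hxF, hxV⟩ := hFV V hV
      have hxA : x ∈ (A : Set X) := by
        by_contra hc
        exact (Set.eq_empty_iff_forall_notMem.mp hFA x) ⟨hxF, hc⟩
      exact ⟨x, hxA, hxV⟩
  · rintro ⟨-, hcov⟩ U ⟨A, hA, rfl⟩
    obtain ⟨p, hp, hsub, hmeet⟩ := hcov ⟨A, hA⟩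
    choose f hfA hfV using fun (V : {V // V ∈ p.2}) => hmeet V.1 V.2
    have : Finite {V // V ∈ p.2} := List.finite_toSet p.2
    refine ⟨p, hp, Set.range f, Set.finite_range f, ?_, ?_, ?_⟩
    · intro V hV
      exact ⟨f ⟨V, hV⟩, ⟨⟨V, hV⟩, rfl⟩, hfV ⟨V, hV⟩⟩
    · intro x hx hxA
      exact hsub hxA hx
    · apply Set.eq_empty_iff_forall_notMem.mpr
      rintro x ⟨⟨V, rfl⟩, hxc⟩
      exact hxc (hfA V)
end

section
/- Let 𝒜 be an uncountable almost disjoint family on ω with ⋃𝒜 = ω, X = Ψ(𝒜) the Mrówka–Isbell space, and ζ = {(V₁,…,Vₙ) : Vᵢ = {Aᵢ} ∪ (Aᵢ \ Dᵢ) for some Aᵢ ∈ 𝒜 and finite Dᵢ ⊆ ω}. Then ζ is a π_V(𝕂(X))-network of X, where 𝕂(X) denotes the family of nonempty compact subsets of X. -/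
open Set

universe u

variable {X : Type u}

/-- The Mrówka–Isbell space Ψ(𝒜): points of ℕ are isolated and each A ∈ 𝒜 has
basic neighborhoods {A} ∪ (A \ D) for finite D ⊆ ℕ. -/
def psiSpace (𝒜 : Set (Set ℕ)) : TopologicalSpace (ℕ ⊕ ↥𝒜) :=
  TopologicalSpace.generateFrom
    ({S | ∃ n : ℕ, S = {Sum.inl n}} ∪
     {S | ∃ A : ↥𝒜, ∃ D : Set ℕ, D.Finite ∧
        S = {Sum.inr A} ∪ Sum.inl '' ((A : Set ℕ) \ D)})

/-- an almost disjoint family of infinite subsets of ℕ -/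
def ADfamily (𝒜 : Set (Set ℕ)) : Prop :=
  (∀ A ∈ 𝒜, A.Infinite) ∧ ∀ A ∈ 𝒜, ∀ B ∈ 𝒜, A ≠ B → (A ∩ B).Finite

theorem stmt4 (𝒜 : Set (Set ℕ)) (hAD : ADfamily 𝒜) (hunc : ¬ 𝒜.Countable)
    (hcov : ⋃₀ 𝒜 = (univ : Set ℕ))
    (ζ : Set (List (Set (ℕ ⊕ ↥𝒜))))
    (hζ : ζ = {L | L ≠ [] ∧ ∀ V ∈ L, ∃ A : ↥𝒜, ∃ D : Set ℕ, D.Finite ∧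
        V = {Sum.inr A} ∪ Sum.inl '' ((A : Set ℕ) \ D)}) :
    @piVnetwork (ℕ ⊕ ↥𝒜) (psiSpace 𝒜)
      {K : Set (ℕ ⊕ ↥𝒜) | @IsCompact _ (psiSpace 𝒜) K ∧ K.Nonempty} ζ := by
  classical
  letI : TopologicalSpace (ℕ ⊕ ↥𝒜) := psiSpace 𝒜
  intro U hU
  obtain ⟨K, ⟨hKc, hKne⟩, rfl⟩ := hU
  -- the basic open sets W A
  set W : ↥𝒜 → Set (ℕ ⊕ ↥𝒜) :=
    fun A => {Sum.inr A} ∪ Sum.inl '' ((A : Set ℕ)) with hW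
  have hWopen : ∀ A, IsOpen (W A) := by
    intro A
    apply TopologicalSpace.GenerateOpen.basic
    exact Or.inr ⟨A, ∅, finite_empty, by simp [hW]⟩
  have hWcov : K ⊆ ⋃ A : ↥𝒜, W A := by
    intro x hx
    cases x with
    | inl n =>
      have : n ∈ ⋃₀ 𝒜 := by rw [hcov]; trivial
      obtain ⟨A, hA, hn⟩ := this
      exact mem_iUnion.mpr ⟨⟨A, hA⟩, Or.inr ⟨n, hn, rfl⟩⟩
    | inr A => exact mem_iUnion.mpr ⟨A, Or.inl rfl⟩
  obtain ⟨t, ht⟩ := hKc.elim_finite_subcover W hWopen hWcov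
  set t' : Finset ↥𝒜 := t.filter (fun A => (K ∩ W A).Nonempty) with ht'
  have hcov' : ∀ x ∈ K, ∃ A ∈ t', x ∈ W A := by
    intro x hx
    obtain ⟨A, hA, hxA⟩ := mem_iUnion₂.mp (ht hx)
    exact ⟨A, Finset.mem_filter.mpr ⟨hA, ⟨x, hx, hxA⟩⟩, hxA⟩
  have ht'ne : t'.Nonempty := by
    obtain ⟨x, hx⟩ := hKne
    obtain ⟨A, hA, _⟩ := hcov' x hx
    exact ⟨A, hA⟩
  set f : ↥𝒜 → (ℕ ⊕ ↥𝒜) :=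
    fun A => if h : (K ∩ W A).Nonempty then h.some else Sum.inl 0 with hf
  have hfK : ∀ A ∈ t', f A ∈ K ∩ W A := by
    intro A hA
    have h : (K ∩ W A).Nonempty := (Finset.mem_filter.mp hA).2
    simpa [hf, h] using h.some_mem
  refine ⟨t'.toList.map W, ?_, (f '' ↑t'), (t'.finite_toSet.image f), ?_, ?_, ?_⟩
  · rw [hζ]
    constructor
    · simp [List.map_eq_nil_iff, Finset.toList_eq_nil, ht'ne.ne_empty]
    · intro V hV
      obtain ⟨A, _, rfl⟩ := List.mem_map.mp hV
      exact ⟨A, ∅, finite_empty, by simp [hW]⟩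
  · intro V hV
    obtain ⟨A, hA, rfl⟩ := List.mem_map.mp hV
    have hA' : A ∈ t' := Finset.mem_toList.mp hA
    exact ⟨f A, ⟨⟨A, hA', rfl⟩, (hfK A hA').2⟩⟩
  · intro x hx hxK
    obtain ⟨A, hA, hxA⟩ := hcov' x hxK
    have := mem_iInter₂.mp hx (W A) (List.mem_map.mpr ⟨A, Finset.mem_toList.mpr hA, rfl⟩)
    exact this hxA
  · apply eq_empty_iff_forall_notMem.mpr
    rintro x ⟨⟨A, hA, rfl⟩, hxU⟩
    exact hxU (hfK A hA).1
end

section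
/- Let 𝒜 be an uncountable almost disjoint family on ω with ⋃𝒜 = ω, X = Ψ(𝒜) the Mrówka–Isbell space, and ζ = {(V₁,…,Vₙ) : Vᵢ = {Aᵢ} ∪ (Aᵢ \ Dᵢ) for some Aᵢ ∈ 𝒜 and finite Dᵢ ⊆ ω}. Then ζ is not a π_V-network of X; in fact, for the open set U = ω ≠ X, every tuple (V₁,…,Vₙ) ∈ ζ satisfies ⋂ᵢ Vᵢᶜ ⊄ U. -/
open Set

universe u

variable {X : Type u}

theorem stmt5 (𝒜 : Set (Set ℕ)) (hAD : ADfamily 𝒜) (hunc : ¬ 𝒜.Countable)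
    (hcov : ⋃₀ 𝒜 = (univ : Set ℕ))
    (ζ : Set (List (Set (ℕ ⊕ ↥𝒜))))
    (hζ : ζ = {L | L ≠ [] ∧ ∀ V ∈ L, ∃ A : ↥𝒜, ∃ D : Set ℕ, D.Finite ∧
        V = {Sum.inr A} ∪ Sum.inl '' ((A : Set ℕ) \ D)}) :
    (∀ L ∈ ζ, ¬ ((⋂ V ∈ L, Vᶜ) ⊆ Sum.inl '' (univ : Set ℕ))) ∧
    ¬ (∀ U : Set (ℕ ⊕ ↥𝒜), @IsOpen _ (psiSpace 𝒜) U → U ≠ univ →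
        ∃ L ∈ ζ, ∃ F : Set (ℕ ⊕ ↥𝒜), F.Finite ∧ (∀ V ∈ L, (F ∩ V).Nonempty) ∧
          (⋂ V ∈ L, Vᶜ) ⊆ U ∧ F ∩ U = ∅) := by

  have hAinf : 𝒜.Infinite := by
    by_contra hfin
    exact hunc ((Set.not_infinite.mp hfin).countable)
  have key : ∀ L ∈ ζ, ¬ ((⋂ V ∈ L, Vᶜ) ⊆ Sum.inl '' (univ : Set ℕ)) := by
    intro L hL hsub
    rw [hζ] at hL
    obtain ⟨hne, hV⟩ := hL
    have hSfin : ((fun A : ↥𝒜 => (A : Set ℕ)) ''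
        {a : ↥𝒜 | ∃ V ∈ L, Sum.inr a ∈ V}).Finite := by
      apply Set.Finite.image
      have : {a : ↥𝒜 | ∃ V ∈ L, Sum.inr a ∈ V} = ⋃ V ∈ L, {a : ↥𝒜 | Sum.inr a ∈ V} := by
        ext a; simp
      rw [this]
      apply Set.Finite.biUnion L.finite_toSet
      intro V hVL
      obtain ⟨A, D, hD, rfl⟩ := hV V hVL
      apply Set.Finite.subset (Set.finite_singleton A)
      intro a ha
      simp only [Set.mem_setOf_eq, Set.mem_union, Set.mem_singleton_iff,
        Set.mem_image] at ha
      rcases ha with h | ⟨n, _, h⟩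
      · simpa using h
      · exact absurd h (by simp)
    obtain ⟨B, hB𝒜, hBS⟩ := hAinf.exists_notMem_finite hSfin
    have hmem : Sum.inr (⟨B, hB𝒜⟩ : ↥𝒜) ∈ ⋂ V ∈ L, Vᶜ := by
      simp only [Set.mem_iInter, Set.mem_compl_iff]
      intro V hVL hmem
      obtain ⟨A, D, hD, rfl⟩ := hV V hVL
      exact hBS ⟨⟨B, hB𝒜⟩, ⟨_, hVL, hmem⟩, rfl⟩
    obtain ⟨n, -, hn⟩ := hsub hmem
    exact Sum.inl_ne_inr hn
  refine ⟨key, fun h => ?_⟩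
  have hopen : @IsOpen _ (psiSpace 𝒜) (Sum.inl '' (univ : Set ℕ)) := by
    have : Sum.inl '' (univ : Set ℕ) = ⋃ n : ℕ, ({Sum.inl n} : Set (ℕ ⊕ ↥𝒜)) := by
      ext x; simp [eq_comm]
    rw [this]
    letI := psiSpace 𝒜
    apply isOpen_iUnion
    intro n
    exact TopologicalSpace.GenerateOpen.basic _ (Or.inl ⟨n, rfl⟩)
  obtain ⟨A, hA⟩ := hAinf.nonempty
  have hneq : (Sum.inl '' (univ : Set ℕ) : Set (ℕ ⊕ ↥𝒜)) ≠ univ := by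
    intro hEq
    have : Sum.inr (⟨A, hA⟩ : ↥𝒜) ∈ Sum.inl '' (univ : Set ℕ) := hEq ▸ mem_univ _
    obtain ⟨n, -, hn⟩ := this
    exact Sum.inl_ne_inr hn
  obtain ⟨L, hL, F, -, -, hsub, -⟩ := h _ hopen hneq
  exact key L hL hsub
end
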